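/- Let P ⊂ SL(3,ℝ) be the upper triangular subgroup. The distinguished curve t ↦ u·exp(tE_{21}) mod P, where u = I + E_{12}, admits a projective reparameterisation: there exist an upper triangular unipotent r ∈ P and a strictly lower triangular Y such that exp(−(t/(t+1))Y)·r·exp(tE_{21}) is upper triangular for all t ≠ −1. Explicitly, one may take Y = E_{21} and r = I + E_{12} + b·E_{13} + c·E_{23} for suitable b, c. -/

import Mathlib

open Matrix

lemma exp_sq_zero {A : Matrix (Fin 3) (Fin 3) ℝ} (h : A * A = 0) :
    NormedSpace.exp A = 1 + A := by
  rw [NormedSpace.exp_eq_tsum (𝕂 := ℝ)]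
  beta_reduce
  rw [tsum_eq_sum (s := Finset.range 2)]
  · simp [Finset.sum_range_succ]
  · intro n hn
    have h2 : A ^ n = 0 := by
      have h2' : A ^ 2 = 0 := by rw [pow_two]; exact h
      have hn2 : 2 ≤ n := by simp at hn; omega
      calc A ^ n = A ^ 2 * A ^ (n - 2) := by rw [← pow_add]; congr 1; omega
      _ = 0 := by rw [h2', zero_mul]
    simp [h2]

/-- The distinguished curve `t ↦ (I + E₁₂)·exp(tE₂₁) mod P` in `SL(3,ℝ)/P` (`P` upper
triangular) admits a projective reparameterisation: with `Y = E₂₁` and suitable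
`r = I + E₁₂ + bE₁₃ + cE₂₃`, the matrix `exp(−(t/(t+1))Y)·r·exp(tE₂₁)` is upper triangular
for all `t ≠ −1`. -/
theorem stmt15 :
    ∃ b c : ℝ, ∀ t : ℝ, t ≠ -1 → ∀ i j : Fin 3, (j : ℕ) < (i : ℕ) →
      (NormedSpace.exp (-(t / (t + 1)) • single (1 : Fin 3) (0 : Fin 3) (1 : ℝ))
        * (1 + single (0 : Fin 3) (1 : Fin 3) (1 : ℝ)
            + b • single (0 : Fin 3) (2 : Fin 3) (1 : ℝ)
            + c • single (1 : Fin 3) (2 : Fin 3) (1 : ℝ))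
        * NormedSpace.exp (t • single (1 : Fin 3) (0 : Fin 3) (1 : ℝ))) i j = 0 := by
  refine ⟨0, 0, fun t ht i j hij => ?_⟩
  have hsq : ∀ s : ℝ, (s • single (1 : Fin 3) (0 : Fin 3) (1 : ℝ)) *
      (s • single (1 : Fin 3) (0 : Fin 3) (1 : ℝ)) = 0 := by
    intro s
    rw [Matrix.smul_mul, Matrix.mul_smul, Matrix.single_mul_single_of_ne]
    · simp
    · decide
  rw [exp_sq_zero (hsq _), exp_sq_zero (hsq _)]
  have ht' : t + 1 ≠ 0 := fun h => ht (by linarith)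
  fin_cases i <;> fin_cases j <;>
    simp_all [Matrix.mul_apply, Fin.sum_univ_succ, Matrix.one_apply, single] <;>
    field_simp <;> ring
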